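/- (Fact 3 of the paper: monotonicity holds unnested but fails nested.) For all α, β, γ ∈ Φ_XY, if α → β is valid then [β]γ → [α]γ is valid. Moreover, there exist α, β ∈ Φ_XY and φ ∈ Φ_ConSHN-BT such that α → β is valid and [β]φ → [α]φ is not valid; concretely, with α = ⊤ ∧ p, β = ⊤ and φ = ◇¬p, the formula (⊤ ∧ p) → ⊤ is valid but [⊤]◇¬p → [⊤ ∧ p]◇¬p is not valid. -/

import Mathlib

namespace ConSHN

/-- Formulas of the language Φ_XY, over atomic propositions indexed by ℕ. -/
inductive FXY : Type
  | atom : ℕ → FXY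
  | bot  : FXY
  | neg  : FXY → FXY
  | conj : FXY → FXY → FXY
  | X    : FXY → FXY
  | Y    : FXY → FXY
  deriving DecidableEq

/-- Formulas of the language Φ_ConSHN-BT. -/
inductive F : Type
  | atom : ℕ → F
  | bot  : F
  | neg  : F → F
  | conj : F → F → F
  | X    : F → F
  | Y    : F → F
  | con  : FXY → F → F
  deriving DecidableEq

namespace FXY

def top : FXY := neg bot
def imp (a b : FXY) : FXY := neg (conj a (neg b))
def or (a b : FXY) : FXY := neg (conj (neg a) (neg b))
def iff (a b : FXY) : FXY := conj (imp a b) (imp b a)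

/-- n-fold application of X. -/
def Xn : ℕ → FXY → FXY
  | 0, a => a
  | n+1, a => X (Xn n a)

/-- n-fold application of Y. -/
def Yn : ℕ → FXY → FXY
  | 0, a => a
  | n+1, a => Y (Yn n a)

/-- The embedding of Φ_XY into Φ_ConSHN-BT. -/
def toF : FXY → F
  | atom p => .atom p
  | bot => .bot
  | neg a => .neg (toF a)
  | conj a b => .conj (toF a) (toF b)
  | X a => .X (toF a)
  | Y a => .Y (toF a)

/-- Purely propositional formulas (no occurrence of X or Y). -/
inductive IsPL : FXY → Prop
  | atom (p : ℕ) : IsPL (atom p)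
  | bot : IsPL bot
  | neg {a} : IsPL a → IsPL (neg a)
  | conj {a b} : IsPL a → IsPL b → IsPL (conj a b)

/-- The language Φ_N-XY : β ::= Xⁿp | Xⁿ⊥ | Yⁿp | Yⁿ⊥ | ¬β | (β ∧ β). -/
inductive NXY : FXY → Prop
  | xatom (n p : ℕ) : NXY (Xn n (atom p))
  | xbot (n : ℕ) : NXY (Xn n bot)
  | yatom (n p : ℕ) : NXY (Yn n (atom p))
  | ybot (n : ℕ) : NXY (Yn n bot)
  | neg {a} : NXY a → NXY (neg a)
  | conj {a b} : NXY a → NXY b → NXY (conj a b)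

end FXY

namespace F

def top : F := neg bot
def imp (a b : F) : F := neg (conj a (neg b))
def or (a b : F) : F := neg (conj (neg a) (neg b))
def iff (a b : F) : F := conj (imp a b) (imp b a)

/-- ⟨α⟩φ := ¬[α]¬φ -/
def dcon (α : FXY) (φ : F) : F := neg (con α (neg φ))

/-- □φ := [⊤]φ -/
def box (φ : F) : F := con FXY.top φ

/-- ◇φ := ¬□¬φ -/
def dia (φ : F) : F := neg (box (neg φ))

/-- Closed formulas of Φ_ConSHN-BT : χ ::= [α]φ | ¬χ | (χ ∧ χ). -/
inductive Closed : F → Prop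
  | con (α : FXY) (φ : F) : Closed (con α φ)
  | neg {χ} : Closed χ → Closed (neg χ)
  | conj {χ₁ χ₂} : Closed χ₁ → Closed χ₂ → Closed (conj χ₁ χ₂)

/-- The language Φ_Con-XY : φ ::= Xⁿp | Xⁿ⊥ | Yⁿp | Yⁿ⊥ | ¬φ | (φ ∧ φ) | [β]φ, β ∈ Φ_N-XY. -/
inductive ConXY : F → Prop
  | xatom (n p : ℕ) : ConXY (FXY.Xn n (.atom p)).toF
  | xbot (n : ℕ) : ConXY (FXY.Xn n .bot).toF
  | yatom (n p : ℕ) : ConXY (FXY.Yn n (.atom p)).toF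
  | ybot (n : ℕ) : ConXY (FXY.Yn n .bot).toF
  | neg {φ} : ConXY φ → ConXY (neg φ)
  | conj {φ ψ} : ConXY φ → ConXY ψ → ConXY (conj φ ψ)
  | con {β : FXY} {φ} : β.NXY → ConXY φ → ConXY (con β φ)

/-- The language Φ_One□-XY : φ ::= β | ¬φ | (φ ∧ φ) | □β, β ∈ Φ_N-XY. -/
inductive OneBox : F → Prop
  | base {β : FXY} : β.NXY → OneBox β.toF
  | neg {φ} : OneBox φ → OneBox (neg φ)
  | conj {φ ψ} : OneBox φ → OneBox ψ → OneBox (conj φ ψ)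
  | box {β : FXY} : β.NXY → OneBox (box β.toF)

end F

/-- A branching-time model. -/
structure Model where
  W : Type
  lt : W → W → Prop
  V : ℕ → Set W
  nonempty : Nonempty W
  serial : ∀ w, ∃ v, lt w v
  root : W
  reach : ∀ w : W, ∃! l : List W,
    List.Chain' lt l ∧ l.head? = some root ∧ l.getLast? = some w

/-- The set TL(M) of timelines of the model M. -/
def Timeline (M : Model) : Set (ℕ → M.W) :=
  {π | π 0 = M.root ∧ ∀ i, M.lt (π i) (π (i + 1))}

/-- AT(C): the acceptable timelines by a context C (AT(∅) = TL(M)). -/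
def AT (M : Model) (C : Set (Set (ℕ → M.W))) : Set (ℕ → M.W) :=
  Timeline M ∩ ⋂₀ C

/-- Truth of Φ_XY formulas at (M, π, i) (independent of contexts). -/
def satXY (M : Model) (π : ℕ → M.W) : ℕ → FXY → Prop
  | i, .atom p => π i ∈ M.V p
  | _, .bot => False
  | i, .neg a => ¬ satXY M π i a
  | i, .conj a b => satXY M π i a ∧ satXY M π i b
  | i, .X a => satXY M π (i + 1) a
  | i, .Y a => 0 < i ∧ satXY M π (i - 1) a

/-- The indefeasible ontic rule ⟨⟨α⟩⟩_i generated by α at instant i. -/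
def ruleOf (M : Model) (α : FXY) (i : ℕ) : Set (ℕ → M.W) :=
  {π | π ∈ Timeline M ∧ satXY M π i α}

/-- The update C + α@i of a context C with α at instant i. -/
def upd (M : Model) (C : Set (Set (ℕ → M.W))) (α : FXY) (i : ℕ) :
    Set (Set (ℕ → M.W)) :=
  insert (ruleOf M α i) C

/-- Truth of Φ_ConSHN-BT formulas at (M, C, π, i). -/
def sat (M : Model) : Set (Set (ℕ → M.W)) → (ℕ → M.W) → ℕ → F → Prop
  | _, π, i, .atom p => π i ∈ M.V p
  | _, _, _, .bot => False
  | C, π, i, .neg φ => ¬ sat M C π i φ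
  | C, π, i, .conj φ ψ => sat M C π i φ ∧ sat M C π i ψ
  | C, π, i, .X φ => sat M C π (i + 1) φ
  | C, π, i, .Y φ => 0 < i ∧ sat M C π (i - 1) φ
  | C, π, i, .con α φ =>
      ∀ π' ∈ AT M (upd M C α i), sat M (upd M C α i) π' i φ

/-- C is a context for M: a finite set of sets of timelines. -/
def IsContext (M : Model) (C : Set (Set (ℕ → M.W))) : Prop :=
  C.Finite ∧ ∀ R ∈ C, R ⊆ Timeline M

/-- Validity: truth at every contextualized pointed model. -/
def Valid (φ : F) : Prop :=
  ∀ (M : Model) (C : Set (Set (ℕ → M.W))) (π : ℕ → M.W) (i : ℕ),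
    IsContext M C → π ∈ AT M C → sat M C π i φ

/-- Satisfiability: truth at some contextualized pointed model. -/
def Satisfiable (φ : F) : Prop :=
  ∃ (M : Model) (C : Set (Set (ℕ → M.W))) (π : ℕ → M.W) (i : ℕ),
    IsContext M C ∧ π ∈ AT M C ∧ sat M C π i φ

/-- Propositional evaluation: ⊥, ¬, ∧ are interpreted, all other formulas
are treated as propositional atoms evaluated by v. -/
def evalProp (v : F → Prop) : F → Prop
  | .bot => False
  | .neg φ => ¬ evalProp v φ
  | .conj φ ψ => evalProp v φ ∧ evalProp v ψ
  | φ => v φ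

/-- φ is a propositional tautology. -/
def Taut (φ : F) : Prop := ∀ v : F → Prop, evalProp v φ

end ConSHN

open ConSHN

namespace ConSHN

/-- Truth of embedded Φ_XY formulas is context-independent. -/
lemma sat_toF (M : Model) (C : Set (Set (ℕ → M.W))) (π : ℕ → M.W) :
    ∀ (i : ℕ) (a : FXY), sat M C π i a.toF ↔ satXY M π i a := by
  intro i a
  induction a generalizing i with
  | atom p => rfl
  | bot => rfl
  | neg a ih => simp [FXY.toF, sat, satXY, ih]
  | conj a b iha ihb => simp [FXY.toF, sat, satXY, iha, ihb]
  | X a ih => simp [FXY.toF, sat, satXY, ih]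
  | Y a ih => simp [FXY.toF, sat, satXY, ih]

lemma sat_imp (M : Model) (C : Set (Set (ℕ → M.W))) (π : ℕ → M.W) (i : ℕ)
    (a b : F) : sat M C π i (F.imp a b) ↔ (sat M C π i a → sat M C π i b) := by
  simp only [F.imp, sat]; tauto

/-- Successor relation of the countermodel. -/
def cexLt (u v : List Bool) : Prop := ∃ b, v = b :: u

/-- The canonical path from the root to a node in the countermodel. -/
def cexPath : List Bool → List (List Bool)
  | [] => [[]]
  | b :: u => cexPath u ++ [b :: u]

lemma cexPath_ne_nil (u : List Bool) : cexPath u ≠ [] := by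
  cases u <;> simp [cexPath]

lemma cexPath_head? (u : List Bool) : (cexPath u).head? = some [] := by
  induction u with
  | nil => rfl
  | cons b u ih =>
    rw [cexPath, List.head?_append_of_ne_nil _ (cexPath_ne_nil u)]
    exact ih

lemma cexPath_getLast? (u : List Bool) : (cexPath u).getLast? = some u := by
  cases u <;> simp [cexPath]

lemma cexPath_chain' (u : List Bool) : List.Chain' cexLt (cexPath u) := by
  induction u with
  | nil => simp [cexPath]; exact List.isChain_singleton _
  | cons b u ih =>
    rw [cexPath]; simp only [List.Chain']; rw [List.isChain_append]
    refine ⟨ih, List.isChain_singleton _, ?_⟩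
    intro x hx y hy
    rw [cexPath_getLast? u] at hx
    simp at hx hy
    subst hx; subst hy
    exact ⟨b, rfl⟩

lemma cexPath_unique : ∀ (u : List Bool) (l : List (List Bool)),
    List.Chain' cexLt l → l.head? = some [] → l.getLast? = some u →
    l = cexPath u := by
  intro u
  induction u with
  | nil =>
    intro l hc hh hg
    rcases l.eq_nil_or_concat with rfl | ⟨l', a, rfl⟩
    · simp at hh
    simp only [List.concat_eq_append] at hc hh hg ⊢
    rw [List.getLast?_concat] at hg
    injection hg with hg; subst hg
    rcases l'.eq_nil_or_concat with rfl | ⟨l'', c, rfl⟩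
    · rfl
    · simp only [List.concat_eq_append] at hc hh
      exfalso
      simp only [List.Chain'] at hc; rw [List.isChain_append] at hc
      have := hc.2.2 c (by simp) [] rfl
      rcases this with ⟨b, hb⟩
      exact List.cons_ne_nil _ _ hb.symm
  | cons b u ih =>
    intro l hc hh hg
    rcases l.eq_nil_or_concat with rfl | ⟨l', a, rfl⟩
    · simp at hh
    simp only [List.concat_eq_append] at hc hh hg ⊢
    rw [List.getLast?_concat] at hg
    injection hg with hg; subst hg
    rcases l'.eq_nil_or_concat with rfl | ⟨l'', c, rfl⟩
    · simp at hh
    · simp only [List.concat_eq_append] at hc hh ⊢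
      simp only [List.Chain'] at hc; rw [List.isChain_append] at hc
      have hlast := hc.2.2 c (by simp) (b :: u) rfl
      rcases hlast with ⟨b', hb'⟩
      have hc2 : u = c := (List.cons_eq_cons.mp hb').2
      subst hc2
      have hh' : (l'' ++ [u]).head? = some [] := by
        rwa [List.head?_append_of_ne_nil _ (by simp)] at hh
      rw [ih (l'' ++ [u]) hc.1 hh' List.getLast?_concat, cexPath]

/-- The countermodel: binary branching tree of finite boolean lists. -/
def cex : Model where
  W := List Bool
  lt := cexLt
  V _ := {w | w.head? = some true}
  nonempty := ⟨[]⟩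
  serial w := ⟨true :: w, true, rfl⟩
  root := []
  reach := by
    intro w
    exact ⟨cexPath w, ⟨cexPath_chain' w, cexPath_head? w, cexPath_getLast? w⟩,
      fun l ⟨h1, h2, h3⟩ => cexPath_unique w l h1 h2 h3⟩

/-- Constant timelines in the countermodel. -/
def cexTL (b : Bool) : ℕ → List Bool := fun k => List.replicate k b

lemma cexTL_mem (b : Bool) : cexTL b ∈ Timeline cex := by
  constructor
  · rfl
  · intro i; exact ⟨b, by simp [cexTL, cex, List.replicate_succ]⟩

end ConSHN

/-- Fact 3: monotonicity holds for unnested conditional strong historical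
necessity but fails for nested occurrences: concretely, (⊤ ∧ p) → ⊤ is valid
while [⊤]◇¬p → [⊤ ∧ p]◇¬p is not. -/
theorem fact_monotonicity_unnested_but_not_nested :
    (∀ α β γ : FXY,
      Valid (F.imp α.toF β.toF) →
      Valid (F.imp (F.con β γ.toF) (F.con α γ.toF))) ∧
    (∀ p : ℕ,
      Valid (F.imp (FXY.conj FXY.top (.atom p)).toF FXY.top.toF) ∧
      ¬ Valid (F.imp (F.con FXY.top (F.dia (F.neg (F.atom p))))
        (F.con (FXY.conj FXY.top (.atom p)) (F.dia (F.neg (F.atom p)))))):= by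
  constructor
  · -- unnested monotonicity
    intro α β γ hv M C π i hC hπ
    rw [sat_imp]
    intro h1 π' hπ'
    have hπ'T : π' ∈ Timeline M := hπ'.1
    have hπ'R : π' ∈ ruleOf M α i :=
      Set.mem_sInter.mp hπ'.2 _ (Set.mem_insert _ _)
    have hαβ := hv M ∅ π' i ⟨Set.finite_empty, by simp⟩
      ⟨hπ'T, by simp⟩
    rw [sat_imp, sat_toF, sat_toF] at hαβ
    have hβ : satXY M π' i β := hαβ hπ'R.2
    have hmem : π' ∈ AT M (upd M C β i) := by
      refine ⟨hπ'T, Set.mem_sInter.mpr ?_⟩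
      intro R hR
      rcases Set.mem_insert_iff.mp hR with rfl | hR
      · exact ⟨hπ'T, hβ⟩
      · exact Set.mem_sInter.mp hπ'.2 R (Set.mem_insert_of_mem _ hR)
    have h2 := h1 π' hmem
    rw [sat_toF] at h2 ⊢
    exact h2
  · intro p
    constructor
    · -- (⊤ ∧ p) → ⊤ is valid
      intro M C π i hC hπ
      rw [sat_imp]
      intro _
      rw [sat_toF]
      simp [FXY.top, satXY]
    · -- nested monotonicity fails
      intro hval
      have hTLt := cexTL_mem true
      have hTLf := cexTL_mem false
      have hmain := hval cex ∅ (cexTL true) 1 ⟨Set.finite_empty, by simp⟩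
        ⟨hTLt, by simp; trivial⟩
      replace hmain := (sat_imp _ _ _ _ _ _).mp hmain
      -- membership of the constant timelines in the relevant rules
      have hrule_top : ∀ b i, cexTL b ∈ ruleOf cex FXY.top i := by
        intro b i
        exact ⟨cexTL_mem b, by simp [FXY.top, satXY]⟩
      have htrue_p : cexTL true 1 ∈ cex.V p := by
        simp [cexTL, cex, List.replicate]; rfl
      have hrule_conj : cexTL true ∈ ruleOf cex (FXY.conj FXY.top (.atom p)) 1 := by
        refine ⟨hTLt, ?_, htrue_p⟩
        simp [FXY.top, satXY]
      -- the antecedent [⊤]◇¬p holds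
      have hA : sat cex ∅ (cexTL true) 1
          (F.con FXY.top (F.dia (F.neg (F.atom p)))) := by
        intro π' hπ'
        show ¬ _
        intro hall
        have hf : cexTL false ∈ AT cex (upd cex (upd cex ∅ FXY.top 1) FXY.top 1) := by
          refine ⟨hTLf, Set.mem_sInter.mpr ?_⟩
          intro R hR
          rcases Set.mem_insert_iff.mp hR with rfl | hR
          · exact hrule_top false 1
          rcases Set.mem_insert_iff.mp hR with rfl | hR
          · exact hrule_top false 1
          · exact absurd hR (Set.notMem_empty R)
        have hcontr := hall (cexTL false) hf
        -- hcontr : ¬¬ (cexTL false 1 ∈ cex.V p), but [false].head? ≠ some true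
        apply hcontr
        show ¬ _
        intro hmem
        have hmem' : cexTL false 1 ∈ cex.V p := hmem
        simp [cexTL, cex, List.replicate] at hmem'; exact absurd (show [false].head? = some true from hmem') (by decide)
      have hB := hmain hA
      -- refute the consequent [⊤ ∧ p]◇¬p
      have hmemt : cexTL true ∈ AT cex (upd cex ∅ (FXY.conj FXY.top (.atom p)) 1) := by
        refine ⟨hTLt, Set.mem_sInter.mpr ?_⟩
        intro R hR
        rcases Set.mem_insert_iff.mp hR with rfl | hR
        · exact hrule_conj
        · exact absurd hR (Set.notMem_empty R)
      have hd := hB (cexTL true) hmemt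
      apply hd
      intro π'' hπ''
      have hπ''R : π'' ∈ ruleOf cex (FXY.conj FXY.top (.atom p)) 1 :=
        Set.mem_sInter.mp hπ''.2 _
          (Set.mem_insert_of_mem _ (Set.mem_insert _ _))
      have hp : π'' 1 ∈ cex.V p := hπ''R.2.2
      show ¬ ¬ _
      exact fun h => h hp
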